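/- Let μ* be an upper quasi-density on ℕ⁺ with lower dual μ∗(X) := 1 − μ*(ℕ⁺ \ X). Then the images of μ*, μ∗, and the induced quasi-density μ (the restriction of μ* to sets X with μ∗(X) = μ*(X)) are all equal to the full interval [0,1]. -/

import Mathlib

open Finset

private lemma mu_empty (μ : Set ℕ+ → ℝ)
    (hhom : ∀ (X : Set ℕ+) (h k : ℕ+),
      μ ((fun x => k * x + h) '' X) = ((k : ℕ) : ℝ)⁻¹ * μ X) :
    μ ∅ = 0 := by
  have := hhom ∅ 1 2
  simp at this
  linarith

private lemma mu_singleton (μ : Set ℕ+ → ℝ)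
    (hhom : ∀ (X : Set ℕ+) (h k : ℕ+),
      μ ((fun x => k * x + h) '' X) = ((k : ℕ) : ℝ)⁻¹ * μ X) (x : ℕ+) :
    μ {x} = 0 := by
  have h1 : μ {(3:ℕ+)} = (2:ℝ)⁻¹ * μ {1} := by
    have := hhom {1} 1 2
    rw [Set.image_singleton, show (2:ℕ+) * 1 + 1 = 3 by decide] at this
    simpa using this
  have h2 : μ {(3:ℕ+)} = μ {1} := by
    have := hhom {1} 2 1
    rw [Set.image_singleton, show (1:ℕ+) * 1 + 2 = 3 by decide] at this
    simpa using this
  have h3 : μ {1} = 0 := by linarith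
  have h4 : μ {2*x} = 0 := by
    have := hhom {1} x x
    rw [Set.image_singleton, show x * 1 + x = 2 * x by ring, h3] at this
    simpa using this
  have h5 : μ {2*x} = μ {x} := by
    have := hhom {x} x 1
    rw [Set.image_singleton, show (1:ℕ+) * x + x = 2 * x by ring] at this
    simpa using this
  linarith

private lemma mu_double (μ : Set ℕ+ → ℝ)
    (hhom : ∀ (X : Set ℕ+) (h k : ℕ+),
      μ ((fun x => k * x + h) '' X) = ((k : ℕ) : ℝ)⁻¹ * μ X) (Y : Set ℕ+) :
    μ ((fun y => 2 * y) '' Y) = (2:ℝ)⁻¹ * μ Y := by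
  have h1 := hhom Y 2 2
  have h2 := hhom ((fun y : ℕ+ => 2 * y) '' Y) 2 1
  rw [Set.image_image] at h2
  simp only [one_mul] at h2
  simp only [PNat.one_coe, Nat.cast_one, inv_one] at h2
  rw [h2] at h1
  simpa using h1

private lemma val_ne_zero_dvd (n : ℕ) (h : padicValNat 2 n ≠ 0) : 2 ∣ n := by
  by_contra hd
  exact h (padicValNat.eq_zero_of_not_dvd hd)

private lemma val_zero_not_dvd (n : ℕ) (hn : n ≠ 0) (hd : padicValNat 2 n = 0) : ¬ 2 ∣ n := by
  rw [padicValNat.eq_zero_iff] at hd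
  rcases hd with h1|h1|h1
  · omega
  · omega
  · exact h1

private lemma val_two_mul (m : ℕ) (hm : m ≠ 0) : padicValNat 2 (2 * m) = padicValNat 2 m + 1 := by
  rw [padicValNat.mul (by norm_num) hm, padicValNat.self (by norm_num)]
  omega

private lemma odd_set_eq :
    {x : ℕ+ | padicValNat 2 (x : ℕ) = 0} =
      (fun x : ℕ+ => 2 * x + 1) '' Set.univ ∪ {1} := by
  ext x
  simp only [Set.mem_setOf_eq, Set.mem_union, Set.mem_image, Set.mem_univ, true_and,
    Set.mem_singleton_iff]
  constructor
  · intro h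
    have hx : (x : ℕ) ≠ 0 := x.ne_zero
    have hnd := val_zero_not_dvd _ hx h
    have hmod : (x : ℕ) % 2 = 1 := by omega
    rcases Nat.lt_or_ge (x : ℕ) 2 with h1 | h1
    · right
      apply PNat.coe_inj.mp
      simp only [PNat.one_coe]
      omega
    · left
      refine ⟨⟨((x:ℕ) - 1) / 2, by omega⟩, ?_⟩
      apply PNat.coe_inj.mp
      push_cast
      show 2 * (((x:ℕ) - 1) / 2) + 1 = (x:ℕ)
      omega
  · rintro (⟨a, rfl⟩ | rfl)
    · apply padicValNat.eq_zero_of_not_dvd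
      push_cast
      have := a.one_le
      omega
    · simp
private lemma split_set (S : ℕ → Prop) (h0 : S 0) :
    {x : ℕ+ | S (padicValNat 2 (x : ℕ))} =
      {x : ℕ+ | padicValNat 2 (x : ℕ) = 0} ∪
        (fun y : ℕ+ => 2 * y) '' {y : ℕ+ | S (padicValNat 2 (y : ℕ) + 1)} := by
  ext x
  simp only [Set.mem_setOf_eq, Set.mem_union, Set.mem_image]
  constructor
  · intro h
    rcases Nat.eq_zero_or_pos (padicValNat 2 (x : ℕ)) with hv | hv
    · left; exact hv
    · right
      have hdvd : 2 ∣ (x : ℕ) := by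
        by_contra hd
        rw [padicValNat.eq_zero_of_not_dvd hd] at hv
        omega
      refine ⟨⟨(x : ℕ) / 2, by have := x.pos; omega⟩, ?_, ?_⟩
      · have hv2 : padicValNat 2 (x : ℕ) = padicValNat 2 ((x:ℕ)/2) + 1 := by
          conv_lhs => rw [show (x:ℕ) = 2 * ((x:ℕ)/2) by omega]
          exact val_two_mul _ (by have := x.pos; omega)
        simp only [PNat.mk_coe]
        rw [← hv2]
        exact h
      · apply PNat.coe_inj.mp
        push_cast
        show 2 * ((x:ℕ)/2) = (x:ℕ)
        omega
  · rintro (hv | ⟨y, hy, rfl⟩)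
    · rw [hv]; exact h0
    · have : padicValNat 2 ((2 * y : ℕ+) : ℕ) = padicValNat 2 (y : ℕ) + 1 := by
        push_cast
        exact val_two_mul _ y.ne_zero
      rw [this]; exact hy

private lemma split_set' (S : ℕ → Prop) (h0 : ¬ S 0) :
    {x : ℕ+ | S (padicValNat 2 (x : ℕ))} =
        (fun y : ℕ+ => 2 * y) '' {y : ℕ+ | S (padicValNat 2 (y : ℕ) + 1)} := by
  ext x
  simp only [Set.mem_setOf_eq, Set.mem_image]
  constructor
  · intro h
    have hv : padicValNat 2 (x : ℕ) ≠ 0 := fun hc => h0 (hc ▸ h)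
    have hdvd : 2 ∣ (x : ℕ) := by
      by_contra hd
      exact hv (padicValNat.eq_zero_of_not_dvd hd)
    refine ⟨⟨(x : ℕ) / 2, by have := x.pos; omega⟩, ?_, ?_⟩
    · have hv2 : padicValNat 2 (x : ℕ) = padicValNat 2 ((x:ℕ)/2) + 1 := by
        conv_lhs => rw [show (x:ℕ) = 2 * ((x:ℕ)/2) by omega]
        exact val_two_mul _ (by have := x.pos; omega)
      simp only [PNat.mk_coe]
      rw [← hv2]
      exact h
    · apply PNat.coe_inj.mp
      push_cast
      show 2 * ((x:ℕ)/2) = (x:ℕ)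
      omega
  · rintro ⟨y, hy, rfl⟩
    have : padicValNat 2 ((2 * y : ℕ+) : ℕ) = padicValNat 2 (y : ℕ) + 1 := by
      push_cast
      exact val_two_mul _ y.ne_zero
    rw [this]; exact hy

private lemma key (μ : Set ℕ+ → ℝ)
    (hle : ∀ X : Set ℕ+, μ X ≤ 1)
    (hsub : ∀ X Y : Set ℕ+, μ (X ∪ Y) ≤ μ X + μ Y)
    (hhom : ∀ (X : Set ℕ+) (h k : ℕ+),
      μ ((fun x => k * x + h) '' X) = ((k : ℕ) : ℝ)⁻¹ * μ X) :
    ∀ (n : ℕ) (S : ℕ → Prop) (_ : DecidablePred S),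
      μ {x : ℕ+ | S (padicValNat 2 (x : ℕ))} ≤
        (∑ j ∈ Finset.range n, if S j then ((2:ℝ)^(j+1))⁻¹ else 0) + ((2:ℝ)^n)⁻¹ := by
  intro n
  induction n with
  | zero => intro S _; simpa using hle _
  | succ n ih =>
    intro S hdec
    have hY : μ {y : ℕ+ | S (padicValNat 2 (y:ℕ) + 1)} ≤
        (∑ j ∈ Finset.range n, if S (j+1) then ((2:ℝ)^(j+1))⁻¹ else 0)
        + ((2:ℝ)^n)⁻¹ := ih (fun j => S (j+1)) (fun j => hdec (j+1))
    set Y : Set ℕ+ := {y : ℕ+ | S (padicValNat 2 (y:ℕ) + 1)} with hYdef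
    have hD : μ ((fun y : ℕ+ => 2*y) '' Y) = 2⁻¹ * μ Y := mu_double μ hhom Y
    have hOdd : μ {x : ℕ+ | padicValNat 2 (x:ℕ) = 0} ≤ 2⁻¹ := by
      rw [odd_set_eq]
      have h1 := hsub ((fun x : ℕ+ => 2 * x + 1) '' Set.univ) {1}
      have h2 := hhom Set.univ 1 2
      have h3 := mu_singleton μ hhom 1
      have h4 := hle Set.univ
      simp only [PNat.mk_ofNat, PNat.val_ofNat, Nat.cast_ofNat] at h2
      linarith
    have hrw : ∑ j ∈ Finset.range (n+1), (if S j then ((2:ℝ)^(j+1))⁻¹ else 0)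
        = (if S 0 then (2:ℝ)⁻¹ else 0)
          + 2⁻¹ * ∑ j ∈ Finset.range n, (if S (j+1) then ((2:ℝ)^(j+1))⁻¹ else 0) := by
      rw [Finset.sum_range_succ', Finset.mul_sum, add_comm]
      congr 1
      · norm_num
      · apply Finset.sum_congr rfl
        intro j _
        split
        · rw [pow_succ, mul_inv]; ring
        · ring
    have hpow : ((2:ℝ)^(n+1))⁻¹ = 2⁻¹ * ((2:ℝ)^n)⁻¹ := by
      rw [pow_succ, mul_inv]; ring
    have hmul : 2⁻¹ * μ Y ≤ 2⁻¹ * ((∑ j ∈ Finset.range n,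
        if S (j+1) then ((2:ℝ)^(j+1))⁻¹ else 0) + ((2:ℝ)^n)⁻¹) :=
      mul_le_mul_of_nonneg_left hY (by norm_num)
    by_cases h0 : S 0
    · rw [split_set S h0]
      have h5 := hsub {x : ℕ+ | padicValNat 2 (x : ℕ) = 0} ((fun y : ℕ+ => 2*y) '' Y)
      rw [hrw, if_pos h0, hpow]
      linarith
    · rw [split_set' S h0, hD]
      rw [hrw, if_neg h0, hpow]
      linarith

private lemma le_of_le_add_inv_pow {a b : ℝ} (h : ∀ n : ℕ, a ≤ b + ((2:ℝ)^n)⁻¹) : a ≤ b := by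
  refine le_of_forall_pos_le_add fun ε hε => ?_
  obtain ⟨n, hn⟩ := pow_unbounded_of_one_lt (ε⁻¹) (one_lt_two (α := ℝ))
  have h2 : ((2:ℝ)^n)⁻¹ < ε := by
    have := inv_strictAnti₀ (by positivity) hn
    rwa [inv_inv] at this
  linarith [h n]

private lemma digit01 (r : ℝ) (j : ℕ) :
    ⌊(2:ℝ)^(j+1) * r⌋ - 2 * ⌊(2:ℝ)^j * r⌋ = 0 ∨
    ⌊(2:ℝ)^(j+1) * r⌋ - 2 * ⌊(2:ℝ)^j * r⌋ = 1 := by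
  set y := (2:ℝ)^j * r with hy
  have hy2 : (2:ℝ)^(j+1) * r = 2 * y := by rw [hy, pow_succ]; ring
  rw [hy2]
  have h1 : 2 * ⌊y⌋ ≤ ⌊2 * y⌋ := by
    apply Int.le_floor.mpr
    push_cast
    nlinarith [Int.floor_le y]
  have h2 : ⌊2 * y⌋ < 2 * ⌊y⌋ + 2 := by
    apply Int.floor_lt.mpr
    push_cast
    nlinarith [Int.lt_floor_add_one y]
  omega

-- partial sum identity
private lemma floor_sum (r : ℝ) (hr0 : 0 ≤ r) (hr1 : r < 1) :
    ∀ n : ℕ, (∑ j ∈ Finset.range n,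
      if (⌊(2:ℝ)^(j+1) * r⌋ - 2 * ⌊(2:ℝ)^j * r⌋ = 1) then ((2:ℝ)^(j+1))⁻¹ else 0)
      = (⌊(2:ℝ)^n * r⌋ : ℝ) / 2^n := by
  intro n
  induction n with
  | zero =>
    simp only [Finset.range_zero, Finset.sum_empty, pow_zero, one_mul]
    rw [Int.floor_eq_zero_iff.mpr ⟨hr0, hr1⟩]
    norm_num
  | succ n ih =>
    rw [Finset.sum_range_succ, ih]
    have h2n : (0:ℝ) < 2^n := by positivity
    rcases digit01 r n with hd | hd
    · rw [if_neg (by omega)]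
      have : ⌊(2:ℝ)^(n+1) * r⌋ = 2 * ⌊(2:ℝ)^n * r⌋ := by omega
      rw [this]
      push_cast
      rw [pow_succ]
      field_simp
      ring
    · rw [if_pos hd]
      have : ⌊(2:ℝ)^(n+1) * r⌋ = 2 * ⌊(2:ℝ)^n * r⌋ + 1 := by omega
      rw [this]
      push_cast
      rw [pow_succ]
      field_simp

private lemma geo_sum : ∀ n : ℕ, ∑ j ∈ Finset.range n, ((2:ℝ)^(j+1))⁻¹ = 1 - ((2:ℝ)^n)⁻¹ := by
  intro n
  induction n with
  | zero => simp
  | succ n ih =>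
    rw [Finset.sum_range_succ, ih]
    have h : (0:ℝ) < 2^n := by positivity
    rw [pow_succ]
    field_simp
    ring

private lemma master (μ : Set ℕ+ → ℝ)
    (huniv : μ Set.univ = 1) (hle : ∀ X : Set ℕ+, μ X ≤ 1)
    (hsub : ∀ X Y : Set ℕ+, μ (X ∪ Y) ≤ μ X + μ Y)
    (hhom : ∀ (X : Set ℕ+) (h k : ℕ+),
      μ ((fun x => k * x + h) '' X) = ((k : ℕ) : ℝ)⁻¹ * μ X)
    (r : ℝ) (hr0 : 0 ≤ r) (hr1 : r ≤ 1) :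
    ∃ X : Set ℕ+, μ X = r ∧ μ Xᶜ = 1 - r := by
  rcases eq_or_lt_of_le hr1 with h1 | h1
  · refine ⟨Set.univ, by rw [huniv, h1], ?_⟩
    rw [Set.compl_univ, mu_empty μ hhom, h1]
    ring
  · set C : ℕ → Prop := fun j => ⌊(2:ℝ)^(j+1) * r⌋ - 2 * ⌊(2:ℝ)^j * r⌋ = 1 with hC
    have hdec : DecidablePred C := fun j => by rw [hC]; infer_instance
    set X : Set ℕ+ := {x | C (padicValNat 2 (x:ℕ))} with hX
    have hfl : ∀ n : ℕ, (⌊(2:ℝ)^n * r⌋ : ℝ) / 2^n ≤ r := by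
      intro n
      rw [div_le_iff₀ (by positivity)]
      calc (⌊(2:ℝ)^n*r⌋:ℝ) ≤ 2^n * r := Int.floor_le _
      _ = r * 2^n := by ring
    have hfl2 : ∀ n : ℕ, r - ((2:ℝ)^n)⁻¹ ≤ (⌊(2:ℝ)^n * r⌋ : ℝ) / 2^n := by
      intro n
      have h2n : (0:ℝ) < 2^n := by positivity
      rw [le_div_iff₀ h2n]
      have := Int.sub_one_lt_floor ((2:ℝ)^n * r)
      have h3 : (r - ((2:ℝ)^n)⁻¹) * 2^n = 2^n * r - 1 := by
        field_simp
      linarith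
    have hXle : μ X ≤ r := by
      apply le_of_le_add_inv_pow
      intro n
      have h := key μ hle hsub hhom n C hdec
      have hCsum : (∑ j ∈ Finset.range n, if C j then ((2:ℝ)^(j+1))⁻¹ else 0)
          = (⌊(2:ℝ)^n * r⌋:ℝ)/2^n := by
        rw [← floor_sum r hr0 h1 n]
        refine Finset.sum_congr rfl fun j _ => ?_
        by_cases hc : C j
        · rw [if_pos hc, if_pos hc]
        · rw [if_neg hc, if_neg hc]
      rw [hCsum, ← hX] at h
      linarith [hfl n]
    have hXcle : μ Xᶜ ≤ 1 - r := by
      apply le_of_le_add_inv_pow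
      intro n
      have h := key μ hle hsub hhom n (fun j => ¬ C j) (fun j => instDecidableNot)
      have hXc : Xᶜ = {x : ℕ+ | ¬ C (padicValNat 2 (x:ℕ))} := by
        rw [hX, Set.compl_setOf]
      rw [← hXc] at h
      have hneg : ∑ j ∈ Finset.range n, (if ¬ C j then ((2:ℝ)^(j+1))⁻¹ else 0)
          = (∑ j ∈ Finset.range n, ((2:ℝ)^(j+1))⁻¹)
            - ∑ j ∈ Finset.range n, (if C j then ((2:ℝ)^(j+1))⁻¹ else 0) := by
        rw [← Finset.sum_sub_distrib]
        apply Finset.sum_congr rfl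
        intro j _
        by_cases hc : C j
        · rw [if_pos hc, if_neg (not_not_intro hc)]; ring
        · rw [if_neg hc, if_pos hc]; ring
      have hCsum : (∑ j ∈ Finset.range n, if C j then ((2:ℝ)^(j+1))⁻¹ else 0)
          = (⌊(2:ℝ)^n * r⌋:ℝ)/2^n := by
        rw [← floor_sum r hr0 h1 n]
        refine Finset.sum_congr rfl fun j _ => ?_
        by_cases hc : C j
        · rw [if_pos hc, if_pos hc]
        · rw [if_neg hc, if_neg hc]
      rw [hneg, geo_sum n, hCsum] at h
      linarith [hfl2 n]
    have hu := hsub X Xᶜ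
    rw [Set.union_compl_self, huniv] at hu
    have hXr : μ X = r := le_antisymm hXle (by linarith)
    exact ⟨X, hXr, le_antisymm hXcle (by linarith)⟩

theorem stmt8 (μ : Set ℕ+ → ℝ)
    (huniv : μ Set.univ = 1) (hle : ∀ X : Set ℕ+, μ X ≤ 1)
    (hsub : ∀ X Y : Set ℕ+, μ (X ∪ Y) ≤ μ X + μ Y)
    (hhom : ∀ (X : Set ℕ+) (h k : ℕ+),
      μ ((fun x => k * x + h) '' X) = ((k : ℕ) : ℝ)⁻¹ * μ X) :
    Set.range μ = Set.Icc 0 1 ∧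
    Set.range (fun X : Set ℕ+ => 1 - μ Xᶜ) = Set.Icc 0 1 ∧
    {r : ℝ | ∃ X : Set ℕ+, 1 - μ Xᶜ = μ X ∧ μ X = r} = Set.Icc 0 1 := by
  have hnn : ∀ X : Set ℕ+, 0 ≤ μ X := by
    intro X
    have h1 := hsub X Xᶜ
    rw [Set.union_compl_self, huniv] at h1
    have h2 := hle Xᶜ
    linarith
  refine ⟨?_, ?_, ?_⟩
  · ext r
    simp only [Set.mem_range, Set.mem_Icc]
    constructor
    · rintro ⟨X, rfl⟩
      exact ⟨hnn X, hle X⟩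
    · rintro ⟨h0, h1⟩
      obtain ⟨X, hX, _⟩ := master μ huniv hle hsub hhom r h0 h1
      exact ⟨X, hX⟩
  · ext r
    simp only [Set.mem_range, Set.mem_Icc]
    constructor
    · rintro ⟨X, rfl⟩
      constructor
      · linarith [hle Xᶜ]
      · linarith [hnn Xᶜ]
    · rintro ⟨h0, h1⟩
      obtain ⟨X, _, hXc⟩ := master μ huniv hle hsub hhom r h0 h1
      refine ⟨X, by rw [hXc]; ring⟩
  · ext r
    simp only [Set.mem_setOf_eq, Set.mem_Icc]
    constructor
    · rintro ⟨X, _, rfl⟩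
      exact ⟨hnn X, hle X⟩
    · rintro ⟨h0, h1⟩
      obtain ⟨X, hX, hXc⟩ := master μ huniv hle hsub hhom r h0 h1
      exact ⟨X, by rw [hXc, hX]; ring, hX⟩
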